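/- arXiv:1512.06961 — 3 statements merged into one kernel-verified Lean document; each statement's English description precedes it below -/
import Mathlib

section
/- Let k ≥ 1 and let (X_n)_{n≥1} and (Y_n)_{n≥1} be binary-valued stochastic processes on a common probability space such that the process X is independent of the process Y (the σ-algebras generated by (X_n)_{n≥1} and (Y_n)_{n≥1} are independent). Define Z_n = X_n ⊕ Y_n, where ⊕ is addition modulo 2. If X is asymptotically k-order two-faced, then Z is asymptotically k-order two-faced: for every u ∈ {0,1}^k, lim_{j→∞} P(Z_{j+1}…Z_{j+k} = u) = 2^{−k}. -/
open MeasureTheory ProbabilityTheory Filter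

/-- The event that the block `X_{j+1} … X_{j+|u|}` of the binary process `X` equals the
word `u` (bits: `false = 0`, `true = 1`; the process is `X 1, X 2, …`). -/
def blockEvent {Ω : Type*} (X : ℕ → Ω → Bool) (j : ℕ) (u : List Bool) : Set Ω :=
  {ω | ∀ i, i < u.length → X (j + 1 + i) ω = u.getD i false}

/-- A binary process `(X_n)_{n≥1}` is `k`-order two-faced if for every `j ≥ 0` and every
word `u ∈ {0,1}^k`, `P(X_{j+1}…X_{j+k} = u) = 2^{-k}`. -/
def IsTwoFaced {Ω : Type*} [MeasurableSpace Ω] (P : Measure Ω)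
    (X : ℕ → Ω → Bool) (k : ℕ) : Prop :=
  ∀ (j : ℕ) (u : List Bool), u.length = k →
    (P (blockEvent X j u)).toReal = ((2 : ℝ) ^ k)⁻¹

/-- A binary process `(X_n)_{n≥1}` is asymptotically `k`-order two-faced if for every
word `u ∈ {0,1}^k`, `lim_{j→∞} P(X_{j+1}…X_{j+k} = u) = 2^{-k}`. -/
def IsAsympTwoFaced {Ω : Type*} [MeasurableSpace Ω] (P : Measure Ω)
    (X : ℕ → Ω → Bool) (k : ℕ) : Prop :=
  ∀ u : List Bool, u.length = k →
    Tendsto (fun j : ℕ => (P (blockEvent X j u)).toReal) atTop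
      (nhds (((2 : ℝ) ^ k)⁻¹))

lemma getD_ofFn_lt {k : ℕ} (g : Fin k → Bool) {i : ℕ} (hi : i < k) :
    (List.ofFn g).getD i false = g ⟨i, hi⟩ := by
  rw [List.getD_eq_getElem _ _ (by simp [hi])]
  simp

/-- The cylinder set in the path space corresponding to a block event. -/
def cylSet (j : ℕ) (u : List Bool) : Set (ℕ → Bool) :=
  {f | ∀ i, i < u.length → f (j + 1 + i) = u.getD i false}

lemma measurableSet_cylSet (j : ℕ) (u : List Bool) : MeasurableSet (cylSet j u) := by
  have h : cylSet j u = ⋂ i ∈ Finset.range u.length,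
      (fun f : ℕ → Bool => f (j + 1 + i)) ⁻¹' {u.getD i false} := by
    ext f
    simp [cylSet]
  rw [h]
  exact MeasurableSet.biInter (Set.to_countable _) fun i _ =>
    (measurable_pi_apply (j + 1 + i)) (measurableSet_singleton _)

lemma blockEvent_eq_preimage {Ω : Type*} (X : ℕ → Ω → Bool) (j : ℕ) (u : List Bool) :
    blockEvent X j u = (fun ω (n : ℕ) => X n ω) ⁻¹' cylSet j u := rfl

lemma measurableSet_blockEvent {Ω : Type*} [MeasurableSpace Ω] {X : ℕ → Ω → Bool}
    (hX : ∀ n, Measurable (X n)) (j : ℕ) (u : List Bool) :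
    MeasurableSet (blockEvent X j u) := by
  rw [blockEvent_eq_preimage]
  exact (measurable_pi_lambda _ fun n => hX n) (measurableSet_cylSet j u)

/-- if `X` and `Y` are binary processes on a common probability space, the
σ-algebras generated by `X` and `Y` are independent, and `X` is asymptotically `k`-order
two-faced, then `Z` with `Z_n = X_n ⊕ Y_n` is asymptotically `k`-order two-faced. -/
theorem xor_preserves_asymp_two_faced {Ω : Type*} [MeasurableSpace Ω]
    (P : Measure Ω) [IsProbabilityMeasure P] (k : ℕ) (hk : 1 ≤ k)
    (X Y : ℕ → Ω → Bool) (hX : ∀ n, Measurable (X n)) (hY : ∀ n, Measurable (Y n))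
    (hindep : IndepFun (fun ω (n : ℕ) => X n ω) (fun ω (n : ℕ) => Y n ω) P)
    (hXtf : IsAsympTwoFaced P X k) :
    IsAsympTwoFaced P (fun n ω => xor (X n ω) (Y n ω)) k := by
  intro u hu
  set c : ℝ := ((2 : ℝ) ^ k)⁻¹ with hc
  -- the word for X given the Y-block pattern b
  set w : (Fin k → Bool) → List Bool :=
    fun b => List.ofFn (fun i : Fin k => xor (u.getD i false) (b i)) with hw
  set v : (Fin k → Bool) → List Bool := fun b => List.ofFn b with hv
  -- set identity
  have hset : ∀ j, blockEvent (fun n ω => xor (X n ω) (Y n ω)) j u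
      = ⋃ b : Fin k → Bool, blockEvent X j (w b) ∩ blockEvent Y j (v b) := by
    intro j
    ext ω
    simp only [Set.mem_iUnion, Set.mem_inter_iff]
    constructor
    · intro h
      refine ⟨fun i => Y (j + 1 + i.1) ω, ?_, ?_⟩
      · intro i hi
        simp only [hw, List.length_ofFn] at hi
        rw [getD_ofFn_lt _ hi]
        have h1 := h i (by rw [hu]; exact hi)
        simp only [blockEvent, Set.mem_setOf_eq] at h1 ⊢
        rw [← h1, Bool.xor_assoc]
        simp
      · intro i hi
        simp only [hv, List.length_ofFn] at hi
        rw [getD_ofFn_lt _ hi]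
    · rintro ⟨b, hxb, hyb⟩
      intro i hi
      rw [hu] at hi
      have h1 := hxb i (by simp [hw, hi])
      have h2 := hyb i (by simp [hv, hi])
      rw [getD_ofFn_lt _ hi] at h1
      rw [getD_ofFn_lt _ hi] at h2
      simp only [Set.mem_setOf_eq] at *
      rw [h1, h2, Bool.xor_assoc]
      simp
  -- disjointness of the pieces
  have hdisj : ∀ j : ℕ, Pairwise (Function.onFun Disjoint
      fun b : Fin k → Bool => blockEvent X j (w b) ∩ blockEvent Y j (v b)) := by
    intro j b b' hbb'
    obtain ⟨i, hi⟩ : ∃ i, b i ≠ b' i := by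
      by_contra h
      push_neg at h
      exact hbb' (funext h)
    refine Set.disjoint_left.2 fun ω hω hω' => hi ?_
    have h1 := hω.2 i (by simp [hv])
    have h2 := hω'.2 i (by simp [hv])
    rw [getD_ofFn_lt _ i.2] at h1 h2
    rw [← h1, ← h2]
  -- disjointness of the Y-blocks alone
  have hdisjY : ∀ j : ℕ, Pairwise (Function.onFun Disjoint
      fun b : Fin k → Bool => blockEvent Y j (v b)) := by
    intro j b b' hbb'
    obtain ⟨i, hi⟩ : ∃ i, b i ≠ b' i := by
      by_contra h
      push_neg at h
      exact hbb' (funext h)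
    refine Set.disjoint_left.2 fun ω hω hω' => hi ?_
    have h1 := hω i (by simp [hv])
    have h2 := hω' i (by simp [hv])
    rw [getD_ofFn_lt _ i.2] at h1 h2
    rw [← h1, ← h2]
  -- the Y-blocks cover Ω
  have hcover : ∀ j : ℕ, (⋃ b : Fin k → Bool, blockEvent Y j (v b)) = Set.univ := by
    intro j
    ext ω
    simp only [Set.mem_iUnion, Set.mem_univ, iff_true]
    refine ⟨fun i => Y (j + 1 + i.1) ω, fun i hi => ?_⟩
    simp only [hv, List.length_ofFn] at hi
    rw [getD_ofFn_lt _ hi]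
  -- the key probability decomposition
  have key : ∀ j, (P (blockEvent (fun n ω => xor (X n ω) (Y n ω)) j u)).toReal
      = ∑ b : Fin k → Bool,
          (P (blockEvent X j (w b))).toReal * (P (blockEvent Y j (v b))).toReal := by
    intro j
    rw [hset j, measure_iUnion (hdisj j) fun b =>
      ((measurableSet_blockEvent hX j (w b)).inter (measurableSet_blockEvent hY j (v b))),
      tsum_fintype, ENNReal.toReal_sum (fun b _ => measure_ne_top P _)]
    refine Finset.sum_congr rfl fun b _ => ?_
    rw [blockEvent_eq_preimage X, blockEvent_eq_preimage Y,
      hindep.measure_inter_preimage_eq_mul _ _ (measurableSet_cylSet j (w b))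
        (measurableSet_cylSet j (v b)), ENNReal.toReal_mul]
  -- Y-block probabilities sum to 1
  have hq1 : ∀ j, ∑ b : Fin k → Bool, (P (blockEvent Y j (v b))).toReal = 1 := by
    intro j
    rw [← ENNReal.toReal_sum (fun b _ => measure_ne_top P _), ← tsum_fintype (L := .unconditional _),
      ← measure_iUnion (hdisjY j) fun b => measurableSet_blockEvent hY j (v b),
      hcover j, measure_univ, ENNReal.toReal_one]
  -- rewrite each term
  have hrw : ∀ j, (∑ b : Fin k → Bool,
      (P (blockEvent X j (w b))).toReal * (P (blockEvent Y j (v b))).toReal)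
      = (∑ b : Fin k → Bool,
          ((P (blockEvent X j (w b))).toReal - c) * (P (blockEvent Y j (v b))).toReal) + c := by
    intro j
    have h1 : ∀ b : Fin k → Bool,
        (P (blockEvent X j (w b))).toReal * (P (blockEvent Y j (v b))).toReal
        = ((P (blockEvent X j (w b))).toReal - c) * (P (blockEvent Y j (v b))).toReal
          + c * (P (blockEvent Y j (v b))).toReal := by
      intro b; ring
    rw [Finset.sum_congr rfl fun b _ => h1 b, Finset.sum_add_distrib, ← Finset.mul_sum, hq1 j,
      mul_one]
  -- the error term tends to 0
  have herr : Tendsto (fun j : ℕ => ∑ b : Fin k → Bool,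
      ((P (blockEvent X j (w b))).toReal - c) * (P (blockEvent Y j (v b))).toReal) atTop
      (nhds 0) := by
    have : Tendsto (fun j : ℕ => ∑ b : Fin k → Bool,
        (0 : ℝ)) atTop (nhds (∑ b : Fin k → Bool, (0 : ℝ))) := tendsto_const_nhds
    have hterm : ∀ b ∈ (Finset.univ : Finset (Fin k → Bool)),
        Tendsto (fun j : ℕ =>
          ((P (blockEvent X j (w b))).toReal - c) * (P (blockEvent Y j (v b))).toReal)
          atTop (nhds 0) := by
      intro b _
      have hX0 : Tendsto (fun j : ℕ => (P (blockEvent X j (w b))).toReal - c) atTop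
          (nhds 0) := by
        have := hXtf (w b) (by simp [hw])
        simpa [hc] using this.sub (tendsto_const_nhds (x := c))
      refine squeeze_zero_norm (fun j => ?_) (by simpa using hX0.abs)
      rw [Real.norm_eq_abs, abs_mul]
      have h01 : |(P (blockEvent Y j (v b))).toReal| ≤ 1 := by
        rw [abs_of_nonneg ENNReal.toReal_nonneg]
        calc (P (blockEvent Y j (v b))).toReal ≤ (1 : ENNReal).toReal :=
              ENNReal.toReal_mono ENNReal.one_ne_top prob_le_one
          _ = 1 := ENNReal.toReal_one
      calc |(P (blockEvent X j (w b))).toReal - c| * |(P (blockEvent Y j (v b))).toReal|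
          ≤ |(P (blockEvent X j (w b))).toReal - c| * 1 :=
            mul_le_mul_of_nonneg_left h01 (abs_nonneg _)
        _ = |(P (blockEvent X j (w b))).toReal - c| := mul_one _
    have hsum := tendsto_finset_sum (Finset.univ : Finset (Fin k → Bool)) hterm
    simpa using hsum
  have : Tendsto (fun j : ℕ => (∑ b : Fin k → Bool,
      ((P (blockEvent X j (w b))).toReal - c) * (P (blockEvent Y j (v b))).toReal) + c) atTop
      (nhds (0 + c)) := herr.add tendsto_const_nhds
  rw [zero_add] at this
  refine this.congr fun j => ?_
  rw [← hrw j, ← key j]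
end

section
/- Let k ≥ 1, π ∈ [0,1], let (X_n)_{n≥1} be an i.i.d. Bernoulli process with P(X_n = 0) = π and P(X_n = 1) = 1 − π, and let V = (V_1,…,V_k) be uniformly distributed on {0,1}^k and independent of (X_n). Define the output of the two-faced transformation τ^k by Y_{−k+1}…Y_0 = V_1…V_k and, for i ≥ 1, Y_i = X_i ⊕ Y_{i−k} ⊕ Y_{i−k+1} ⊕ … ⊕ Y_{i−1} (addition modulo 2). Then (Y_n)_{n≥1} is k-order two-faced: for every j ≥ 0 and every word u ∈ {0,1}^k, P(Y_{j+1}…Y_{j+k} = u) = 2^{−k}. -/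
open MeasureTheory ProbabilityTheory Filter

namespace TFaux

def wext (k : ℕ) (w : Fin k → Bool) : ℕ → Bool :=
  fun r => if h : r < k then w ⟨r, h⟩ else false

def bigxor (k : ℕ) (w : Fin k → Bool) : Bool :=
  (List.range k).foldl (fun b r => xor b (wext k w r)) false

lemma foldl_xor_init (l : List ℕ) (g : ℕ → Bool) (a c : Bool) :
    l.foldl (fun b r => xor b (g r)) (xor a c)
      = xor a (l.foldl (fun b r => xor b (g r)) c) := by
  induction l generalizing c with
  | nil => rfl
  | cons h t ih =>
      simp only [List.foldl_cons, Bool.xor_assoc]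
      exact ih (xor c (g h))

lemma foldl_congr' (l : List ℕ) (g1 g2 : ℕ → Bool) (h : ∀ r ∈ l, g1 r = g2 r) (c : Bool) :
    l.foldl (fun b r => xor b (g1 r)) c = l.foldl (fun b r => xor b (g2 r)) c := by
  induction l generalizing c with
  | nil => rfl
  | cons a t ih =>
      simp only [List.foldl_cons]
      rw [h a List.mem_cons_self]
      exact ih (fun r hr => h r (List.mem_cons_of_mem _ hr)) _

lemma foldl_xor_init' (l : List ℕ) (g : ℕ → Bool) (a : Bool) :
    l.foldl (fun b r => xor b (g r)) a = xor a (l.foldl (fun b r => xor b (g r)) false) := by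
  have h := foldl_xor_init l g a false
  simpa using h

def step (k : ℕ) (b : Bool) (w : Fin k → Bool) : Fin k → Bool :=
  fun r => if h : (r : ℕ) + 1 < k then w ⟨(r : ℕ) + 1, h⟩ else xor b (bigxor k w)

def tailfold (k : ℕ) (w : Fin k → Bool) : Bool :=
  (List.range (k - 1)).foldl (fun b r => xor b (wext k w (r + 1))) false

lemma bigxor_eq (k : ℕ) (hk : 1 ≤ k) (w : Fin k → Bool) :
    bigxor k w = xor (w ⟨0, hk⟩) (tailfold k w) := by
  obtain ⟨kk, rfl⟩ : ∃ kk, k = kk + 1 := ⟨k - 1, by omega⟩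
  unfold bigxor tailfold
  rw [List.range_succ_eq_map, List.foldl_cons, List.foldl_map]
  have h0 : xor false (wext (kk+1) w 0) = xor (w ⟨0, hk⟩) false := by
    simp [wext]
  rw [h0, foldl_xor_init]
  simp only [Nat.add_sub_cancel, Nat.succ_eq_add_one]

lemma step_injective (k : ℕ) (hk : 1 ≤ k) (b : Bool) : Function.Injective (step k b) := by
  intro w1 w2 h
  have tail : ∀ s : Fin k, 0 < (s : ℕ) → w1 s = w2 s := by
    intro s hs
    have hlt : ((s : ℕ) - 1) + 1 < k := by omega
    have h' := congrFun h ⟨(s : ℕ) - 1, by omega⟩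
    simp only [step, dif_pos hlt] at h'
    have hfin : (⟨(s : ℕ) - 1 + 1, hlt⟩ : Fin k) = s := by
      apply Fin.ext; simp; omega
    rwa [hfin] at h'
  have htail : tailfold k w1 = tailfold k w2 := by
    unfold tailfold
    apply foldl_congr'
    intro r hr
    by_cases hlt : r + 1 < k
    · simp only [wext, dif_pos hlt]
      exact tail ⟨r + 1, hlt⟩ (by simp)
    · simp [wext, hlt]
  have hbig : bigxor k w1 = bigxor k w2 := by
    have hnlt : ¬ ((k - 1) + 1 < k) := by omega
    have h' := congrFun h ⟨k - 1, by omega⟩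
    simp only [step, dif_neg hnlt] at h'
    have := congrArg (xor b) h'
    simpa [← Bool.xor_assoc] using this
  have h0 : w1 ⟨0, hk⟩ = w2 ⟨0, hk⟩ := by
    rw [bigxor_eq k hk w1, bigxor_eq k hk w2, htail] at hbig
    have := congrArg (fun x => xor x (tailfold k w2)) hbig
    simpa [Bool.xor_assoc] using hbig
  funext s
  rcases Nat.eq_zero_or_pos (s : ℕ) with hs | hs
  · have : s = ⟨0, hk⟩ := by apply Fin.ext; simp [hs]
    rw [this]; exact h0
  · exact tail s hs

noncomputable def stepE (k : ℕ) (hk : 1 ≤ k) (b : Bool) : (Fin k → Bool) ≃ (Fin k → Bool) :=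
  Equiv.ofBijective (step k b) (Finite.injective_iff_bijective.mp (step_injective k hk b))

@[simp] lemma stepE_apply (k : ℕ) (hk : 1 ≤ k) (b : Bool) (w : Fin k → Bool) :
    stepE k hk b w = step k b w := rfl

noncomputable def Emap (k : ℕ) (hk : 1 ≤ k) : (m : ℕ) → (Fin m → Bool) →
    ((Fin k → Bool) ≃ (Fin k → Bool))
  | 0, _ => Equiv.refl _
  | (m + 1), g => (Emap k hk m (fun i => g i.castSucc)).trans (stepE k hk (g (Fin.last m)))

end TFaux

/-- let `(X_n)_{n≥1}` be an i.i.d. Bernoulli process with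
`P(X_n = 0) = π`, `P(X_n = 1) = 1 - π`, and let the seed `V` be uniformly distributed on
`{0,1}^k` and independent of `(X_n)_{n≥1}`. Define `Y_{-k+1}…Y_0 = V` and, for `i ≥ 1`,
`Y_i = X_i ⊕ Y_{i-k} ⊕ Y_{i-k+1} ⊕ ⋯ ⊕ Y_{i-1}` (the two-faced conversion `τ^k`).
Then `(Y_n)_{n≥1}` is `k`-order two-faced: for every `j ≥ 0` and every `u ∈ {0,1}^k`,
`P(Y_{j+1}…Y_{j+k} = u) = 2^{-k}` (bits: `false = 0`, `true = 1`). -/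
theorem two_faced_transform_uniform_seed {Ω : Type*} [MeasurableSpace Ω]
    (P : Measure Ω) [IsProbabilityMeasure P]
    (k : ℕ) (hk : 1 ≤ k) (π : ℝ) (hπ : π ∈ Set.Icc (0 : ℝ) 1)
    (X : ℕ → Ω → Bool) (hX : ∀ n, Measurable (X n))
    (hBern : ∀ n : ℕ, 1 ≤ n → (P {ω | X n ω = false}).toReal = π ∧
      (P {ω | X n ω = true}).toReal = 1 - π)
    (hiid : iIndepFun
      (fun n : {n : ℕ // 1 ≤ n} => X n.1) P)
    (V : Ω → Fin k → Bool) (hVmeas : Measurable V)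
    (hVunif : ∀ v : Fin k → Bool, (P {ω | V ω = v}).toReal = ((2 : ℝ) ^ k)⁻¹)
    (hVindep : IndepFun V (fun ω (n : {n : ℕ // 1 ≤ n}) => X n.1 ω) P)
    (Y : ℤ → Ω → Bool)
    (hseed : ∀ (r : Fin k) (ω : Ω), Y (1 - (k : ℤ) + r) ω = V ω r)
    (hrec : ∀ i : ℕ, 1 ≤ i → ∀ ω : Ω,
      Y (i : ℤ) ω =
        (List.range k).foldl (fun b r => xor b (Y ((i : ℤ) - k + r) ω)) (X i ω)) :
    ∀ (j : ℕ) (u : List Bool), u.length = k →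
      (P {ω | ∀ i, i < k → Y ((j : ℤ) + 1 + i) ω = u.getD i false}).toReal =
        ((2 : ℝ) ^ k)⁻¹ := by
  classical
  -- the window of the last k values of Y after step mm is a bijective image of the seed
  have window : ∀ (mm : ℕ) (ω : Ω) (r : Fin k),
      TFaux.Emap k hk mm (fun i : Fin mm => X ((i : ℕ) + 1) ω) (V ω) r
        = Y ((mm : ℤ) - k + 1 + (r : ℕ)) ω := by
    intro mm
    induction mm with
    | zero =>
        intro ω r
        have h1 : ((0 : ℕ) : ℤ) - k + 1 + (r : ℕ) = 1 - (k : ℤ) + (r : ℕ) := by push_cast; ring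
        rw [h1]
        have h2 := hseed r ω
        have h3 : (1 - (k : ℤ) + (r : Fin k)) = 1 - (k : ℤ) + ((r : ℕ) : ℤ) := by norm_cast
        rw [h3] at h2
        rw [h2]
        rfl
    | succ mm ih =>
        intro ω r
        have hEm : TFaux.Emap k hk (mm + 1) (fun i : Fin (mm + 1) => X ((i : ℕ) + 1) ω) (V ω)
            = TFaux.step k (X (mm + 1) ω)
                (TFaux.Emap k hk mm (fun i : Fin mm => X ((i : ℕ) + 1) ω) (V ω)) := by
          have hcast : (fun i : Fin mm =>
              (fun i : Fin (mm + 1) => X ((i : ℕ) + 1) ω) i.castSucc)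
              = fun i : Fin mm => X ((i : ℕ) + 1) ω := by
            funext i; simp [Fin.coe_castSucc]
          simp [TFaux.Emap, Equiv.trans_apply, hcast, Fin.val_last]
        rw [hEm]
        by_cases hlt : (r : ℕ) + 1 < k
        · show (if h : (r : ℕ) + 1 < k then _ else _) = _
          rw [dif_pos hlt]
          have h2 := ih ω ⟨(r : ℕ) + 1, hlt⟩
          rw [h2]
          congr 1
          push_cast
          ring
        · show (if h : (r : ℕ) + 1 < k then _ else _) = _
          rw [dif_neg hlt]
          have hr : (r : ℕ) = k - 1 := by have := r.isLt; omega
          have hidx : ((mm + 1 : ℕ) : ℤ) - k + 1 + (r : ℕ) = ((mm + 1 : ℕ) : ℤ) := by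
            rw [hr]
            have : ((k - 1 : ℕ) : ℤ) = (k : ℤ) - 1 := by
              have : 1 ≤ k := hk; push_cast [this]; ring
            rw [this]; push_cast; ring
          rw [hidx, hrec (mm + 1) (by omega) ω]
          have hbind : (do let x ← List.range k; pure ((x : ℤ)))
              = (List.range k).map (fun x : ℕ => (x : ℤ)) :=
            List.flatMap_pure_eq_map (fun x : ℕ => (x : ℤ)) _
          rw [hbind]
          simp only [List.foldl_map]
          have hcong : (List.range k).foldl
              (fun b t => xor b (Y (((mm + 1 : ℕ) : ℤ) - k + (t : ℕ)) ω)) (X (mm + 1) ω)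
              = (List.range k).foldl
                (fun b t => xor b (TFaux.wext k
                  (TFaux.Emap k hk mm (fun i : Fin mm => X ((i : ℕ) + 1) ω) (V ω)) t))
                (X (mm + 1) ω) := by
            apply TFaux.foldl_congr'
            intro t ht
            have htk : t < k := List.mem_range.mp ht
            have h3 := ih ω ⟨t, htk⟩
            simp only [TFaux.wext, dif_pos htk]
            rw [h3]
            congr 1
            push_cast
            ring
          rw [hcong, TFaux.foldl_xor_init']
          rfl
  intro j u _hu
  set m := j + k with hm
  set XFm : Ω → Fin m → Bool := fun ω i => X ((i : ℕ) + 1) ω with hXFm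
  have hXFmeas : Measurable XFm := measurable_pi_lambda _ (fun i => hX _)
  set uvec : Fin k → Bool := fun i => u.getD (i : ℕ) false with huvec
  set A : (Fin m → Bool) → Set Ω :=
    fun g => XFm ⁻¹' {g} ∩ V ⁻¹' {(TFaux.Emap k hk m g).symm uvec} with hA
  have hSet : {ω | ∀ i, i < k → Y ((j : ℤ) + 1 + i) ω = u.getD i false} = ⋃ g, A g := by
    ext ω
    simp only [Set.mem_setOf_eq, Set.mem_iUnion, hA, Set.mem_inter_iff, Set.mem_preimage,
      Set.mem_singleton_iff]
    have hidx : ∀ r : Fin k, ((m : ℕ) : ℤ) - k + 1 + (r : ℕ) = (j : ℤ) + 1 + (r : ℕ) := by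
      intro r; rw [hm]; push_cast; ring
    constructor
    · intro h
      refine ⟨XFm ω, rfl, ?_⟩
      rw [Equiv.eq_symm_apply]
      funext r
      rw [window m ω r, hidx r]
      exact h (r : ℕ) r.isLt
    · rintro ⟨g, hg, hV⟩ i hik
      have hfull : TFaux.Emap k hk m (XFm ω) (V ω) = uvec := by
        rw [hg, hV]
        exact (TFaux.Emap k hk m g).apply_symm_apply uvec
      have h2 := congrFun hfull ⟨i, hik⟩
      rw [window m ω ⟨i, hik⟩, hidx ⟨i, hik⟩] at h2
      exact h2
  have hAmeas : ∀ g, MeasurableSet (A g) := fun g =>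
    (hXFmeas (measurableSet_singleton g)).inter (hVmeas (measurableSet_singleton _))
  have hdisj : Pairwise (Function.onFun Disjoint A) := by
    intro g g' hne
    refine Set.disjoint_left.mpr ?_
    rintro ω ⟨hg, _⟩ ⟨hg', _⟩
    exact hne ((Set.mem_singleton_iff.mp hg).symm.trans (Set.mem_singleton_iff.mp hg'))
  have hVval : ∀ v : Fin k → Bool, P (V ⁻¹' {v}) = ENNReal.ofReal ((2 : ℝ) ^ k)⁻¹ := by
    intro v
    have h1 : {ω | V ω = v} = V ⁻¹' {v} := rfl
    rw [← ENNReal.ofReal_toReal (measure_ne_top P (V ⁻¹' {v})), ← h1, hVunif v]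
  have hPA : ∀ g, P (A g) = P (XFm ⁻¹' {g}) * ENNReal.ofReal ((2 : ℝ) ^ k)⁻¹ := by
    intro g
    have hGmeas : Measurable fun (f : {n : ℕ // 1 ≤ n} → Bool) (i : Fin m) =>
        f ⟨(i : ℕ) + 1, by omega⟩ :=
      measurable_pi_lambda _ (fun i => measurable_pi_apply _)
    have hInd : IndepFun V XFm P := hVindep.comp measurable_id hGmeas
    have h2 := hInd.measure_inter_preimage_eq_mul {(TFaux.Emap k hk m g).symm uvec} {g}
      (measurableSet_singleton _) (measurableSet_singleton _)
    rw [hA]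
    simp only []
    rw [Set.inter_comm, h2, hVval, mul_comm]
  have hsum : P {ω | ∀ i, i < k → Y ((j : ℤ) + 1 + i) ω = u.getD i false}
      = ENNReal.ofReal ((2 : ℝ) ^ k)⁻¹ := by
    rw [hSet, measure_iUnion hdisj hAmeas, tsum_fintype]
    rw [Finset.sum_congr rfl (fun g _ => hPA g), ← Finset.sum_mul]
    rw [sum_measure_preimage_singleton Finset.univ
      (fun g _ => hXFmeas (measurableSet_singleton g))]
    simp
  rw [hsum, ENNReal.toReal_ofReal (by positivity)]
end

section
/- Let 0 = n_0 < n_1 < n_2 < ⋯ be a strictly increasing sequence of positive integers and let X^1, X^2, X^3, … be binary-valued stochastic processes on a common probability space that are mutually independent, where X^i = (X^i_n)_{n≥1} is asymptotically n_i-order two-faced for each i. Define the process W = (W_n)_{n≥1} by W_i = X^1_i ⊕ X^2_i ⊕ … ⊕ X^m_i whenever n_{m−1} < i ≤ n_m (addition modulo 2). Then W is asymptotically twice two-faced: for every integer k ≥ 1 and every word u ∈ {0,1}^k, lim_{j→∞} P(W_{j+1}…W_{j+k} = u) = 2^{−k}. -/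
open MeasureTheory ProbabilityTheory Filter

namespace TwoFacedAux

lemma measurableSet_of_finite {γ : Type*} [Fintype γ] (E : Set (γ → Bool)) :
    MeasurableSet E := by
  have h1 : ∀ y : γ → Bool, MeasurableSet ({y} : Set (γ → Bool)) := by
    intro y
    have : ({y} : Set (γ → Bool)) = ⋂ c, (fun x : γ → Bool => x c) ⁻¹' {y c} := by
      ext x; simp [funext_iff]
    rw [this]
    exact MeasurableSet.iInter fun c => measurable_pi_apply c (measurableSet_singleton _)
  have hE : E = ⋃ y ∈ E, {y} := by simp
  rw [hE]
  exact MeasurableSet.biUnion (Set.to_countable E) fun y _ => h1 y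

lemma measurable_of_finite_dom {γ β : Type*} [Fintype γ] [MeasurableSpace β]
    (F : (γ → Bool) → β) : Measurable F := fun _ _ => measurableSet_of_finite _

lemma measurable_finite_bool {Ω γ : Type*} [MeasurableSpace Ω] [Fintype γ]
    (g : γ → Ω → Bool) (hg : ∀ c, Measurable (g c)) (E : Set (γ → Bool)) :
    MeasurableSet ((fun ω c => g c ω) ⁻¹' E) :=
  (measurable_pi_lambda _ fun c => hg c) (measurableSet_of_finite E)

lemma measurable_xor {Ω : Type*} [MeasurableSpace Ω] {f g : Ω → Bool} (hf : Measurable f)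
    (hg : Measurable g) : Measurable fun ω => xor (f ω) (g ω) := by
  have h : (fun ω => xor (f ω) (g ω)) =
      (fun y : Fin 2 → Bool => xor (y 0) (y 1)) ∘ (fun ω => ![f ω, g ω]) := by
    funext ω; simp
  rw [h]
  exact (measurable_of_finite_dom _).comp (measurable_pi_lambda _ (by
    intro c; fin_cases c <;> simpa))

lemma measurableSet_blockEvent {Ω : Type*} [MeasurableSpace Ω] {X : ℕ → Ω → Bool}
    (hX : ∀ m, Measurable (X m)) (j : ℕ) (u : List Bool) :
    MeasurableSet (blockEvent X j u) := by
  have h : blockEvent X j u =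
      (fun ω (l : Fin u.length) => X (j + 1 + (l : ℕ)) ω) ⁻¹'
        {y | ∀ l : Fin u.length, y l = u.getD l false} := by
    ext ω
    simp only [blockEvent, Set.mem_setOf_eq, Set.mem_preimage]
    exact ⟨fun h l => h l l.isLt, fun h i hi => h ⟨i, hi⟩⟩
  rw [h]
  exact measurable_finite_bool _ (fun l => hX _) _

def toZ (b : Bool) : ZMod 2 := cond b 1 0

lemma toZ_xor : ∀ a b : Bool, toZ (xor a b) = toZ a + toZ b := by decide

lemma toZ_inj : ∀ {a b : Bool}, toZ a = toZ b → a = b := by decide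

lemma toZ_add_self : ∀ b : Bool, toZ b + toZ b = 0 := by decide

lemma toZ_foldl (g : ℕ → Bool) : ∀ (l : List ℕ) (b0 : Bool),
    toZ (l.foldl (fun b s => xor b (g s)) b0) = toZ b0 + (l.map fun s => toZ (g s)).sum
  | [], b0 => by simp
  | a :: l, b0 => by
    simp only [List.foldl_cons, List.map_cons, List.sum_cons]
    rw [toZ_foldl g l, toZ_xor]; ring

lemma map_sum_range (f : ℕ → ZMod 2) :
    ∀ m, ((List.range m).map f).sum = ∑ s ∈ Finset.range m, f s
  | 0 => by simp
  | m + 1 => by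
    rw [List.range_succ, List.map_append, List.sum_append, Finset.sum_range_succ,
      map_sum_range f m]
    simp

lemma measurable_foldl {Ω : Type*} [MeasurableSpace Ω] (g : ℕ → Ω → Bool)
    (hg : ∀ s, Measurable (g s)) :
    ∀ (l : List ℕ) (c : Ω → Bool), Measurable c →
      Measurable fun ω => l.foldl (fun b s => xor b (g s ω)) (c ω)
  | [], _, hc => hc
  | a :: l, c, hc => by
    simp only [List.foldl_cons]
    exact measurable_foldl g hg l (fun ω => xor (c ω) (g a ω)) (measurable_xor hc (hg a))

lemma asymp_mono {Ω : Type*} [MeasurableSpace Ω] (P : Measure Ω) [IsProbabilityMeasure P]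
    {X : ℕ → Ω → Bool} (hX : ∀ m, Measurable (X m)) {k K : ℕ} (hkK : k ≤ K)
    (h : IsAsympTwoFaced P X K) : IsAsympTwoFaced P X k := by
  intro u hu
  obtain ⟨d, rfl⟩ : ∃ d, K = k + d := ⟨K - k, by omega⟩
  have hlen : ∀ w : Fin d → Bool, (u ++ List.ofFn w).length = k + d := by
    intro w; simp [hu]
  have hgetl : ∀ (w : Fin d → Bool) (i : ℕ), i < k →
      (u ++ List.ofFn w).getD i false = u.getD i false := by
    intro w i hi
    exact List.getD_append _ _ _ _ (by omega)
  have hgetr : ∀ (w : Fin d → Bool) (l : Fin d),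
      (u ++ List.ofFn w).getD (k + (l : ℕ)) false = w l := by
    intro w l
    rw [List.getD_append_right _ _ _ _ (by omega), hu]
    simp only [Nat.add_sub_cancel_left]
    rw [List.getD_eq_getElem _ _ (by simp [l.isLt])]
    simp
  have hun : ∀ j, blockEvent X j u = ⋃ w : Fin d → Bool, blockEvent X j (u ++ List.ofFn w) := by
    intro j
    ext ω
    simp only [blockEvent, Set.mem_setOf_eq, Set.mem_iUnion]
    constructor
    · intro hω
      refine ⟨fun l => X (j + 1 + (k + (l : ℕ))) ω, ?_⟩
      intro i hi
      rw [hlen] at hi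
      rcases lt_or_ge i k with hik | hik
      · rw [hgetl _ _ hik]; exact hω i (by omega)
      · have : i = k + (i - k) := by omega
        rw [this]
        have hlt : i - k < d := by omega
        have := hgetr (fun l => X (j + 1 + (k + (l : ℕ))) ω) ⟨i - k, hlt⟩
        simp only at this
        rw [this]
    · rintro ⟨w, hω⟩ i hi
      rw [hu] at hi
      rw [← hgetl w i hi]
      exact hω i (by rw [hlen]; omega)
  have hdis : ∀ j, Pairwise (Function.onFun Disjoint
      fun w : Fin d → Bool => blockEvent X j (u ++ List.ofFn w)) := by
    intro j w w' hne
    rw [Function.onFun, Set.disjoint_left]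
    intro ω h1 h2
    apply hne
    funext l
    have e1 := h1 (k + (l : ℕ)) (by rw [hlen]; omega)
    have e2 := h2 (k + (l : ℕ)) (by rw [hlen]; omega)
    rw [hgetr] at e1 e2
    rw [← e1, ← e2]
  have key : ∀ j, (P (blockEvent X j u)).toReal =
      ∑ w : Fin d → Bool, (P (blockEvent X j (u ++ List.ofFn w))).toReal := by
    intro j
    rw [hun j, measure_iUnion (hdis j) (fun w => measurableSet_blockEvent hX _ _),
      tsum_fintype, ENNReal.toReal_sum (fun w _ => measure_ne_top P _)]
  have hsum : Tendsto (fun j => ∑ w : Fin d → Bool,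
      (P (blockEvent X j (u ++ List.ofFn w))).toReal) atTop
      (nhds (∑ _w : Fin d → Bool, ((2 : ℝ) ^ (k + d))⁻¹)) :=
    tendsto_finset_sum _ (fun w _ => h (u ++ List.ofFn w) (hlen w))
  have hval : (∑ _w : Fin d → Bool, ((2 : ℝ) ^ (k + d))⁻¹) = ((2 : ℝ) ^ k)⁻¹ := by
    rw [Finset.sum_const]
    simp only [Finset.card_univ]
    rw [Fintype.card_fun]
    simp only [Fintype.card_bool, Fintype.card_fin, nsmul_eq_mul, Nat.cast_pow,
      Nat.cast_ofNat, pow_add]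
    rw [mul_inv]
    field_simp
  rw [hval] at hsum
  exact hsum.congr (fun j => (key j).symm)

end TwoFacedAux

/-- let `0 = n_0 < n_1 < n_2 < ⋯` and let `X^1, X^2, …` be mutually
independent binary processes (here `X i` is the process `X^{i+1}`, which is
asymptotically `n_{i+1}`-order two-faced). If `W_i = X^1_i ⊕ ⋯ ⊕ X^m_i` whenever
`n_{m-1} < i ≤ n_m`, then `W` is asymptotically twice two-faced: asymptotically
`k`-order two-faced for every `k ≥ 1`. -/
theorem xor_series_asymp_twice_two_faced {Ω : Type*} [MeasurableSpace Ω]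
    (P : Measure Ω) [IsProbabilityMeasure P]
    (n : ℕ → ℕ) (hn0 : n 0 = 0) (hmono : StrictMono n)
    (X : ℕ → ℕ → Ω → Bool) (hX : ∀ i m, Measurable (X i m))
    (hindep : iIndepFun
      (fun i ω (m : ℕ) => X i m ω) P)
    (htf : ∀ i : ℕ, IsAsympTwoFaced P (X i) (n (i + 1)))
    (W : ℕ → Ω → Bool)
    (hW : ∀ (m i : ℕ), n m < i → i ≤ n (m + 1) → ∀ ω,
      W i ω = (List.range (m + 1)).foldl (fun b j => xor b (X j i ω)) false) :
    ∀ k, 1 ≤ k → IsAsympTwoFaced P W k := by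
  classical
  intro k hk u hu
  set t := k - 1 with htdef
  have hkn : k ≤ n (t + 1) := by
    have h1 : t + 1 = k := by omega
    calc k = t + 1 := h1.symm
    _ ≤ n (t + 1) := hmono.le_apply
  have htf' : IsAsympTwoFaced P (X t) k :=
    TwoFacedAux.asymp_mono P (hX t) hkn (htf t)
  set M : ℕ → ℕ := fun i => Nat.findGreatest (fun m => n m < i) i with hMdef
  have hM1 : ∀ i, 1 ≤ i → n (M i) < i := by
    intro i hi
    exact Nat.findGreatest_spec (P := fun m => n m < i) (Nat.zero_le i)
      (show n 0 < i by rw [hn0]; omega)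
  have hM2 : ∀ i, 1 ≤ i → i ≤ n (M i + 1) := by
    intro i hi
    by_contra hcon
    push_neg at hcon
    have h2 : M i + 1 ≤ i := le_trans hmono.le_apply (le_of_lt hcon)
    have h3 : M i + 1 ≤ M i := Nat.le_findGreatest (P := fun m => n m < i) h2 hcon
    omega
  have hMt : ∀ j l : ℕ, n t ≤ j → t ≤ M (j + 1 + l) := by
    intro j l hj
    have h1 : n t < j + 1 + l := by omega
    have h2 := hM2 (j + 1 + l) (by omega)
    have h3 : n t < n (M (j + 1 + l) + 1) := lt_of_lt_of_le h1 h2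
    have := hmono.lt_iff_lt.mp h3
    omega
  have hMb : ∀ j l : ℕ, l < k → M (j + 1 + l) + 1 ≤ j + k := by
    intro j l hl
    have h1 : M (j + 1 + l) ≤ n (M (j + 1 + l)) := hmono.le_apply
    have h2 := hM1 (j + 1 + l) (by omega)
    omega
  have hWf : ∀ i, 1 ≤ i → ∀ ω, W i ω =
      (List.range (M i + 1)).foldl (fun b s => xor b (X s i ω)) false :=
    fun i hi ω => hW (M i) i (hM1 i hi) (hM2 i hi) ω
  have hWz : ∀ i, 1 ≤ i → ∀ ω,
      TwoFacedAux.toZ (W i ω) = ∑ s ∈ Finset.range (M i + 1), TwoFacedAux.toZ (X s i ω) := by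
    intro i hi ω
    rw [hWf i hi ω, TwoFacedAux.toZ_foldl, TwoFacedAux.map_sum_range]
    simp [TwoFacedAux.toZ]
  have hWm : ∀ i, 1 ≤ i → Measurable (W i) := by
    intro i hi
    have h : W i = fun ω => (List.range (M i + 1)).foldl (fun b s => xor b (X s i ω)) false :=
      funext fun ω => hWf i hi ω
    rw [h]
    exact TwoFacedAux.measurable_foldl (fun s => X s i) (fun s => hX s i) _ _ measurable_const
  have hRz : ∀ (j l : ℕ) (ω : Ω), n t ≤ j →
      TwoFacedAux.toZ (xor (W (j + 1 + l) ω) (X t (j + 1 + l) ω)) =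
        ∑ s ∈ (Finset.range (M (j + 1 + l) + 1)).erase t, TwoFacedAux.toZ (X s (j + 1 + l) ω) := by
    intro j l ω hj
    rw [TwoFacedAux.toZ_xor, hWz (j + 1 + l) (by omega) ω]
    have htm : t ∈ Finset.range (M (j + 1 + l) + 1) :=
      Finset.mem_range.mpr (by have := hMt j l hj; omega)
    rw [← Finset.sum_erase_add _ _ htm, add_assoc, TwoFacedAux.toZ_add_self, add_zero]
  set c : ℝ := ((2 : ℝ) ^ k)⁻¹ with hc
  set A : (Fin k → Bool) → ℕ → Set Ω := fun v j =>
    {ω | ∀ l : Fin k, xor (W (j + 1 + (l : ℕ)) ω) (X t (j + 1 + (l : ℕ)) ω) = v l} with hAdef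
  set wv : (Fin k → Bool) → List Bool := fun v =>
    List.ofFn (fun l : Fin k => xor (u.getD (l : ℕ) false) (v l)) with hwv
  have hwvlen : ∀ v, (wv v).length = k := by intro v; simp [hwv]
  have hwvget : ∀ (v : Fin k → Bool) (i : ℕ) (hi : i < k),
      (wv v).getD i false = xor (u.getD i false) (v ⟨i, hi⟩) := by
    intro v i hi
    rw [List.getD_eq_getElem _ _ (by rw [hwvlen]; exact hi)]
    simp [hwv]
  set B : (Fin k → Bool) → ℕ → Set Ω := fun v j => blockEvent (X t) j (wv v) with hBdef
  have hAmem : ∀ (v : Fin k → Bool) (j : ℕ) (ω : Ω), ω ∈ A v j ↔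
      ∀ l : Fin k, xor (W (j + 1 + (l : ℕ)) ω) (X t (j + 1 + (l : ℕ)) ω) = v l := by
    intro v j ω; rw [hAdef]; rfl
  have hBmem : ∀ (v : Fin k → Bool) (j : ℕ) (ω : Ω), ω ∈ B v j ↔
      ∀ l : Fin k, X t (j + 1 + (l : ℕ)) ω = (wv v).getD (l : ℕ) false := by
    intro v j ω
    rw [hBdef]
    simp only [blockEvent, Set.mem_setOf_eq]
    constructor
    · intro h l; exact h l (by rw [hwvlen]; exact l.isLt)
    · intro h i hi; exact h ⟨i, by rwa [hwvlen] at hi⟩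
  have hAmeas : ∀ v j, MeasurableSet (A v j) := by
    intro v j
    have h : A v j = (fun ω (l : Fin k) =>
        xor (W (j + 1 + (l : ℕ)) ω) (X t (j + 1 + (l : ℕ)) ω)) ⁻¹' {y | ∀ l, y l = v l} := by
      ext ω; rw [hAmem]; exact Iff.rfl
    rw [h]
    exact TwoFacedAux.measurable_finite_bool _
      (fun l => TwoFacedAux.measurable_xor (hWm _ (by omega)) (hX t _)) _
  have hBmeas : ∀ v j, MeasurableSet (B v j) := by
    intro v j; rw [hBdef]; exact TwoFacedAux.measurableSet_blockEvent (fun m => hX t m) j (wv v)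
  have hAdis : ∀ j, Pairwise (Function.onFun Disjoint (fun v => A v j)) := by
    intro j v v' hne
    rw [Function.onFun, Set.disjoint_left]
    intro ω h1 h2
    rw [hAmem] at h1 h2
    exact hne (funext fun l => (h1 l).symm.trans (h2 l))
  have hApart : ∀ j, (⋃ v, A v j) = Set.univ := by
    intro j
    ext ω
    simp only [Set.mem_iUnion, Set.mem_univ, iff_true]
    exact ⟨fun l => xor (W (j + 1 + (l : ℕ)) ω) (X t (j + 1 + (l : ℕ)) ω), by
      rw [hAmem]; intro l; rfl⟩
  -- independence
  have hprod : ∀ j, n t ≤ j → ∀ v, P (A v j ∩ B v j) = P (A v j) * P (B v j) := by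
    intro j hj v
    set S : Finset ℕ := (Finset.range (j + k)).erase t with hS
    set T : Finset ℕ := ({t} : Finset ℕ) with hT
    have hfm : ∀ i : ℕ, Measurable (fun ω (m : ℕ) => X i m ω) :=
      fun i => measurable_pi_lambda _ (fun m => hX i m)
    have hST : Disjoint S T := by
      rw [hS, hT, Finset.disjoint_singleton_right]
      simp
    have hind2 := hindep.indepFun_finset S T hST hfm
    set A' : Set (↥S → ℕ → Bool) := {x | ∀ l : Fin k,
        (∑ s : ↥S, if (s : ℕ) < M (j + 1 + (l : ℕ)) + 1 then
          TwoFacedAux.toZ (x s (j + 1 + (l : ℕ))) else 0) = TwoFacedAux.toZ (v l)} with hA'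
    have htT : t ∈ T := by rw [hT]; exact Finset.mem_singleton_self t
    set B' : Set (↥T → ℕ → Bool) :=
      {x | ∀ l : Fin k, x ⟨t, htT⟩ (j + 1 + (l : ℕ)) = (wv v).getD (l : ℕ) false} with hB'
    have hA'm : MeasurableSet A' := by
      have h : A' = (fun (x : ↥S → ℕ → Bool) (p : ↥S × Fin k) => x p.1 (j + 1 + (p.2 : ℕ))) ⁻¹'
          {y : ↥S × Fin k → Bool | ∀ l : Fin k,
            (∑ s : ↥S, if (s : ℕ) < M (j + 1 + (l : ℕ)) + 1 then
              TwoFacedAux.toZ (y (s, l)) else 0) = TwoFacedAux.toZ (v l)} := rfl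
      rw [h]
      exact (measurable_pi_lambda _ fun p =>
        (measurable_pi_apply _).comp (measurable_pi_apply _))
        (TwoFacedAux.measurableSet_of_finite _)
    have hB'm : MeasurableSet B' := by
      have h : B' = (fun (x : ↥T → ℕ → Bool) (p : ↥T × Fin k) => x p.1 (j + 1 + (p.2 : ℕ))) ⁻¹'
          {y : ↥T × Fin k → Bool | ∀ l : Fin k,
            y (⟨t, htT⟩, l) = (wv v).getD (l : ℕ) false} := rfl
      rw [h]
      exact (measurable_pi_lambda _ fun p =>
        (measurable_pi_apply _).comp (measurable_pi_apply _))
        (TwoFacedAux.measurableSet_of_finite _)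
    have hA'eq : A v j = (fun ω (i : ↥S) (m : ℕ) => X (i : ℕ) m ω) ⁻¹' A' := by
      ext ω
      rw [hAmem, Set.mem_preimage, hA', Set.mem_setOf_eq]
      refine forall_congr' fun l => ?_
      have hsum : (∑ s : ↥S, if (s : ℕ) < M (j + 1 + (l : ℕ)) + 1 then
          TwoFacedAux.toZ (X (s : ℕ) (j + 1 + (l : ℕ)) ω) else 0)
          = TwoFacedAux.toZ (xor (W (j + 1 + (l : ℕ)) ω) (X t (j + 1 + (l : ℕ)) ω)) := by
        rw [hRz j (l : ℕ) ω hj]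
        rw [Finset.sum_coe_sort S (fun s => if s < M (j + 1 + (l : ℕ)) + 1 then
          TwoFacedAux.toZ (X s (j + 1 + (l : ℕ)) ω) else 0)]
        rw [← Finset.sum_filter]
        congr 1
        ext a
        simp only [hS, Finset.mem_filter, Finset.mem_erase, Finset.mem_range]
        have := hMb j (l : ℕ) l.isLt
        constructor
        · rintro ⟨⟨h1, h2⟩, h3⟩; exact ⟨h1, h3⟩
        · rintro ⟨h1, h2⟩; exact ⟨⟨h1, by omega⟩, h2⟩
      rw [hsum]
      exact ⟨fun h => by rw [h], fun h => TwoFacedAux.toZ_inj h⟩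
    have hB'eq : B v j = (fun ω (i : ↥T) (m : ℕ) => X (i : ℕ) m ω) ⁻¹' B' := by
      ext ω
      rw [hBmem, Set.mem_preimage, hB', Set.mem_setOf_eq]
    rw [hA'eq, hB'eq]
    exact hind2.measure_inter_preimage_eq_mul A' B' hA'm hB'm
  -- decomposition of the block event of W
  have hb1 : ∀ a b : Bool, xor a (xor a b) = b := by decide
  have hb2 : ∀ a b c : Bool, xor a b = c → a = xor c b := by decide
  have hb3 : ∀ a b : Bool, xor a (xor b a) = b := by decide
  have hun : ∀ j, n t ≤ j → blockEvent W j u = ⋃ v, A v j ∩ B v j := by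
    intro j hj
    ext ω
    simp only [blockEvent, Set.mem_setOf_eq, Set.mem_iUnion, Set.mem_inter_iff]
    constructor
    · intro hω
      refine ⟨fun l => xor (W (j + 1 + (l : ℕ)) ω) (X t (j + 1 + (l : ℕ)) ω), ?_, ?_⟩
      · rw [hAmem]; intro l; rfl
      · rw [hBmem]
        intro l
        rw [hwvget _ _ l.isLt]
        have hWu := hω (l : ℕ) (by rw [hu]; exact l.isLt)
        simp only [Fin.eta]
        rw [← hWu]
        exact (hb1 _ _).symm
    · rintro ⟨v, hA1, hB1⟩ i hi
      rw [hAmem] at hA1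
      rw [hBmem] at hB1
      rw [hu] at hi
      have e1 := hA1 ⟨i, hi⟩
      have e2 := hB1 ⟨i, hi⟩
      rw [hwvget _ _ hi] at e2
      simp only [Fin.eta] at e1 e2
      have e3 := hb2 _ _ _ e1
      rw [e3, e2]
      exact hb3 _ _
  have hkey : ∀ j, n t ≤ j → (P (blockEvent W j u)).toReal =
      ∑ v : Fin k → Bool, (P (A v j)).toReal * (P (B v j)).toReal := by
    intro j hj
    have hdis' : Pairwise (Function.onFun Disjoint (fun v => A v j ∩ B v j)) :=
      fun v v' hne => ((hAdis j) hne).mono Set.inter_subset_left Set.inter_subset_left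
    rw [hun j hj, measure_iUnion hdis' (fun v => (hAmeas v j).inter (hBmeas v j)),
      tsum_fintype, ENNReal.toReal_sum (fun v _ => measure_ne_top P _)]
    exact Finset.sum_congr rfl fun v _ => by rw [hprod j hj v, ENNReal.toReal_mul]
  have hone : ∀ j, ∑ v : Fin k → Bool, (P (A v j)).toReal = 1 := by
    intro j
    have h2 : P (⋃ v, A v j) = ∑' v, P (A v j) :=
      measure_iUnion (hAdis j) (fun v => hAmeas v j)
    rw [hApart j] at h2
    calc ∑ v : Fin k → Bool, (P (A v j)).toReal
        = (∑ v : Fin k → Bool, P (A v j)).toReal :=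
          (ENNReal.toReal_sum (fun v _ => measure_ne_top P _)).symm
      _ = (∑' v, P (A v j)).toReal := by rw [tsum_fintype]
      _ = (P Set.univ).toReal := by rw [← h2]
      _ = 1 := by simp
  -- final limit argument
  have hBt : ∀ v : Fin k → Bool,
      Tendsto (fun j => (P (B v j)).toReal) atTop (nhds c) := by
    intro v
    have := htf' (wv v) (hwvlen v)
    rw [hBdef]
    exact this
  have hG : Tendsto (fun j => ∑ v : Fin k → Bool, |(P (B v j)).toReal - c|) atTop (nhds 0) := by
    have h0 := tendsto_finset_sum (Finset.univ : Finset (Fin k → Bool))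
      (f := fun v j => |(P (B v j)).toReal - c|)
      (fun v _ => by simpa using ((hBt v).sub (tendsto_const_nhds (x := c))).abs)
    simpa using h0
  have habs : ∀ᶠ j in atTop, |(P (blockEvent W j u)).toReal - c| ≤
      ∑ v : Fin k → Bool, |(P (B v j)).toReal - c| := by
    filter_upwards [eventually_ge_atTop (n t)] with j hj
    rw [hkey j hj]
    have h1 : ∑ v : Fin k → Bool, (P (A v j)).toReal * (P (B v j)).toReal - c
        = ∑ v : Fin k → Bool, (P (A v j)).toReal * ((P (B v j)).toReal - c) := by
      simp only [mul_sub]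
      rw [Finset.sum_sub_distrib, ← Finset.sum_mul, hone j, one_mul]
    rw [h1]
    refine le_trans (Finset.abs_sum_le_sum_abs _ _) ?_
    refine Finset.sum_le_sum fun v _ => ?_
    rw [abs_mul, abs_of_nonneg ENNReal.toReal_nonneg]
    have ha1 : (P (A v j)).toReal ≤ 1 := by
      have h := prob_le_one (μ := P) (s := A v j)
      have := ENNReal.toReal_mono ENNReal.one_ne_top h
      simpa using this
    calc (P (A v j)).toReal * |(P (B v j)).toReal - c|
        ≤ 1 * |(P (B v j)).toReal - c| :=
          mul_le_mul_of_nonneg_right ha1 (abs_nonneg _)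
      _ = _ := one_mul _
  have hzero : Tendsto (fun j => |(P (blockEvent W j u)).toReal - c|) atTop (nhds 0) :=
    squeeze_zero' (Eventually.of_forall fun j => abs_nonneg _) habs hG
  rw [tendsto_iff_dist_tendsto_zero]
  simpa [Real.dist_eq] using hzero
end
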